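/- Let q ≥ 1 and let s₀, …, s_{q+1} ∈ ℝ^N. Let Y be a real N×q matrix such that Yᵀ·Δ²S is invertible, and let γ₀, …, γ_q ∈ ℝ satisfy ∑_{j=0}^{q} γⱼ = 1 and Yᵀ (∑_{j=0}^{q} γⱼ Δsⱼ) = 0. Then the generalized residual satisfies ∑_{j=0}^{q} γⱼ s_{j+1} − ∑_{j=0}^{q} γⱼ sⱼ = ∑_{j=0}^{q} γⱼ Δsⱼ = Δs₀ − Δ²S (Yᵀ Δ²S)⁻¹ Yᵀ Δs₀, where Δ²S is the N×q matrix with columns Δ²s₀, …, Δ²s_{q−1}. -/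
import Mathlib


open Matrix Finset

/-- First forward differences `Δsⱼ = s_{j+1} − sⱼ` (for `0 ≤ j ≤ q`) of a finite sequence
of vectors `s₀, …, s_{q+1}` in `ℝ^N`. -/
def forwardDiff {N q : ℕ} (s : Fin (q + 2) → Fin N → ℝ) (j : Fin (q + 1)) : Fin N → ℝ :=
  fun n => s j.succ n - s j.castSucc n

/-- `Δ²S`: the `N × q` matrix whose columns are the second forward differences
`Δ²s₀, …, Δ²s_{q−1}`, where `Δ²sⱼ = Δs_{j+1} − Δsⱼ`. -/
def D2Sq {N q : ℕ} (s : Fin (q + 2) → Fin N → ℝ) : Matrix (Fin N) (Fin q) ℝ :=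
  Matrix.of fun n j => forwardDiff s j.succ n - forwardDiff s j.castSucc n

/-- If `Yᵀ Δ²S` is invertible and the weights `γ₀, …, γ_q` satisfy `∑ γⱼ = 1` and
`Yᵀ (∑ γⱼ Δsⱼ) = 0`, then the generalized residual satisfies
`∑ γⱼ s_{j+1} − ∑ γⱼ sⱼ = ∑ γⱼ Δsⱼ = Δs₀ − Δ²S (Yᵀ Δ²S)⁻¹ Yᵀ Δs₀`. -/
theorem generalized_residual_matrix_form (N q : ℕ) (hq : 1 ≤ q)
    (s : Fin (q + 2) → Fin N → ℝ)
    (Y : Matrix (Fin N) (Fin q) ℝ)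
    (hY : IsUnit (Yᵀ * D2Sq s))
    (γ : Fin (q + 1) → ℝ)
    (hsum : ∑ j, γ j = 1)
    (horth : Yᵀ *ᵥ (∑ j : Fin (q + 1), γ j • forwardDiff s j) = 0) :
    (∑ j : Fin (q + 1), γ j • s j.succ) - (∑ j : Fin (q + 1), γ j • s j.castSucc) =
        ∑ j : Fin (q + 1), γ j • forwardDiff s j ∧
    ∑ j : Fin (q + 1), γ j • forwardDiff s j =
      forwardDiff s 0 - D2Sq s *ᵥ ((Yᵀ * D2Sq s)⁻¹ *ᵥ (Yᵀ *ᵥ forwardDiff s 0)) := by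
  have h1 : (∑ j : Fin (q + 1), γ j • s j.succ) - (∑ j : Fin (q + 1), γ j • s j.castSucc) =
      ∑ j : Fin (q + 1), γ j • forwardDiff s j := by
    rw [← Finset.sum_sub_distrib]
    refine Finset.sum_congr rfl fun j _ => ?_
    funext n
    simp [forwardDiff, mul_sub]
  refine ⟨h1, ?_⟩
  set A := Yᵀ * D2Sq s with hA
  set c : Fin q → ℝ := fun i => ∑ j : Fin (q+1), if (i:ℕ) < (j:ℕ) then γ j else 0 with hc
  have key : (∑ j : Fin (q + 1), γ j • forwardDiff s j) = forwardDiff s 0 + D2Sq s *ᵥ c := by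
    funext n
    have hlt : ∀ i : ℕ, min i q < q + 1 := fun i => by omega
    set F : ℕ → ℝ := fun i => forwardDiff s ⟨min i q, hlt i⟩ n with hF
    have hFj : ∀ j : Fin (q+1), forwardDiff s j n = F (j : ℕ) := by
      intro j
      have : (⟨min (j:ℕ) q, hlt j⟩ : Fin (q+1)) = j := by
        ext; simp; omega
      rw [hF]; simp only []; rw [this]
    have hD : ∀ i : Fin q, D2Sq s n i = F ((i:ℕ)+1) - F (i:ℕ) := by
      intro i
      have h1 : ((i.succ : Fin (q+1)) : ℕ) = (i:ℕ)+1 := rfl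
      have h2 : ((i.castSucc : Fin (q+1)) : ℕ) = (i:ℕ) := rfl
      rw [D2Sq]
      simp only [Matrix.of_apply]
      rw [hFj, hFj, h1, h2]
    have hsub : ∀ m : ℕ, m ≤ q →
        ∑ k ∈ Finset.range q, (if k < m then (F (k+1) - F k) else 0) = F m - F 0 := by
      intro m hm
      rw [← Finset.sum_filter]
      have : (Finset.range q).filter (fun k => k < m) = Finset.range m := by
        ext k; simp; omega
      rw [this, Finset.sum_range_sub F m]
    have lhs_eval : (∑ j : Fin (q + 1), γ j • forwardDiff s j) n
        = ∑ j : Fin (q+1), γ j * F (j:ℕ) := by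
      rw [Finset.sum_apply]
      exact Finset.sum_congr rfl fun j _ => by rw [Pi.smul_apply, smul_eq_mul, hFj]
    rw [lhs_eval, Pi.add_apply]
    have rhs_eval : (D2Sq s *ᵥ c) n = ∑ i : Fin q, (F ((i:ℕ)+1) - F (i:ℕ)) * c i := by
      rw [Matrix.mulVec, dotProduct]
      exact Finset.sum_congr rfl fun i _ => by rw [hD]
    rw [rhs_eval, hFj 0]
    have swap : ∑ i : Fin q, (F ((i:ℕ)+1) - F (i:ℕ)) * c i
        = ∑ j : Fin (q+1), γ j * (F (j:ℕ) - F 0) := by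
      simp only [hc, Finset.mul_sum, mul_ite, mul_zero]
      rw [Finset.sum_comm]
      refine Finset.sum_congr rfl fun j _ => ?_
      have : ∀ i : Fin q, (if (i:ℕ) < (j:ℕ) then (F ((i:ℕ)+1) - F (i:ℕ)) * γ j else 0)
          = (if (i:ℕ) < (j:ℕ) then (F ((i:ℕ)+1) - F (i:ℕ)) else 0) * γ j := by
        intro i; split <;> simp
      rw [Finset.sum_congr rfl fun i _ => this i, ← Finset.sum_mul,
        Fin.sum_univ_eq_sum_range (fun k => if k < (j:ℕ) then (F (k+1) - F k) else 0),
        hsub (j:ℕ) (Nat.lt_succ_iff.mp j.isLt)]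
      ring
    rw [swap]
    have : ∑ j : Fin (q+1), γ j * (F (j:ℕ) - F 0)
        = (∑ j : Fin (q+1), γ j * F (j:ℕ)) - (∑ j, γ j) * F 0 := by
      rw [Finset.sum_mul, ← Finset.sum_sub_distrib]
      exact Finset.sum_congr rfl fun j _ => by ring
    rw [this, hsum]
    have h0 : F ((0 : Fin (q+1)) : ℕ) = F 0 := rfl
    rw [h0]; ring
  have hdet : IsUnit A.det := (Matrix.isUnit_iff_isUnit_det A).mp hY
  have hinv : A⁻¹ * A = 1 := Matrix.nonsing_inv_mul A hdet
  have h2 : Yᵀ *ᵥ forwardDiff s 0 + A *ᵥ c = 0 := by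
    have h := horth
    rw [key] at h
    rw [Matrix.mulVec_add, Matrix.mulVec_mulVec] at h
    exact h
  have hc' : c = -(A⁻¹ *ᵥ (Yᵀ *ᵥ forwardDiff s 0)) := by
    have hAc : A *ᵥ c = -(Yᵀ *ᵥ forwardDiff s 0) := by
      rw [eq_neg_iff_add_eq_zero, add_comm]; exact h2
    calc c = A⁻¹ *ᵥ (A *ᵥ c) := by
            rw [Matrix.mulVec_mulVec, hinv, Matrix.one_mulVec]
      _ = -(A⁻¹ *ᵥ (Yᵀ *ᵥ forwardDiff s 0)) := by rw [hAc, Matrix.mulVec_neg]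
  rw [key, hc', Matrix.mulVec_neg, ← sub_eq_add_neg]
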